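/- arXiv:1911.08812 — 2 statements merged into one kernel-verified Lean document; each statement's English description precedes it below -/
import Mathlib

section
/- Let A be an Archimedean, infinitesimal-free, proper *-ring, and write a ≺ b for a = ab. For all a, b, c ∈ A: (1) a*a ≺ b implies a ≺ b; (2) if b = b* and b ≥ 0 then a ≺ bⁿ implies a ≺ b, for every integer n ≥ 1; (3) if ‖a‖ ≤ 1 then a ≺ b implies a*a ≤ b*b; (4) if ‖b‖ ≤ 1 then aba* = aa* implies a ≺ b; (5) if ‖b‖ ≤ 1 then a ≺ b* implies a ≺ b; (6) if ‖b‖ ≤ 1 and ‖c‖ ≤ 1 then a ≺ bc implies a ≺ bb*; (7) if ⌈c⌉ ≤ 1 and ‖c‖ ≤ 1 then a ≺ b together with b ≤ c implies a ≺ c. -/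
open scoped ENNReal
open scoped NNReal

/-- `B_Σ`: the set of finite sums `p₁ + ⋯ + p_k` (`k ≥ 1`) with each `pᵢ = bᵢbᵢ*`
for some `bᵢ ∈ B`. -/
def starSums {A : Type*} [NonUnitalRing A] [StarRing A] (B : Set A) : Set A :=
  {x | ∃ (n : ℕ) (f : Fin (n + 1) → A), (∀ i, f i ∈ B) ∧ x = ∑ i, f i * star (f i)}

/-- `⌈a⌉ = sup_b inf {m/n : m(bb*) − n(bab*) ∈ A_Σ}` computed in `[0,∞]`. -/
noncomputable def ceil' {A : Type*} [NonUnitalRing A] [StarRing A] (a : A) : ℝ≥0∞ :=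
  ⨆ b : A, sInf {q : ℝ≥0∞ | ∃ m n : ℕ, 0 < m ∧ 0 < n ∧ q = (m : ℝ≥0∞) / (n : ℝ≥0∞) ∧
    m • (b * star b) - n • (b * a * star b) ∈ starSums (Set.univ : Set A)}

/-- `‖a‖ = √(max(⌈aa*⌉, ⌈a*a⌉))` computed in `[0,∞]`. -/
noncomputable def rnorm' {A : Type*} [NonUnitalRing A] [StarRing A] (a : A) : ℝ≥0∞ :=
  (max (ceil' (a * star a)) (ceil' (star a * a))) ^ (1 / 2 : ℝ)

/-- The order `a ≤ b ⇔ ⌈a − b⌉ = 0`. -/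
def cle {A : Type*} [NonUnitalRing A] [StarRing A] (a b : A) : Prop :=
  ceil' (a - b) = 0

/-- `pw b n = b^(n+1)` (powers in a possibly non-unital ring). -/
def pw {A : Type*} [NonUnitalRing A] (b : A) : ℕ → A
  | 0 => b
  | n + 1 => pw b n * b

lemma nat_div_le_div {m n p q : ℕ} (hn : 0 < n) (hq : 0 < q) :
    (m : ℝ≥0∞) / n ≤ (p : ℝ≥0∞) / q ↔ m * q ≤ n * p := by
  rw [ENNReal.div_le_iff (by exact_mod_cast hn.ne') (by simp),
    mul_comm, mul_div_assoc', ENNReal.le_div_iff_mul_le (Or.inl (by exact_mod_cast hq.ne'))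
      (Or.inl (by simp))]
  rw [show ((n:ℝ≥0∞) * p) = ((n*p : ℕ) : ℝ≥0∞) by push_cast; ring,
    show ((m:ℝ≥0∞) * q) = ((m*q : ℕ) : ℝ≥0∞) by push_cast; ring, Nat.cast_le]

lemma nat_div_lt_div {m n p q : ℕ} (hn : 0 < n) (hq : 0 < q) :
    (m : ℝ≥0∞) / n < (p : ℝ≥0∞) / q ↔ m * q < n * p := by
  rw [← not_le, ← not_le, not_iff_not, nat_div_le_div hq hn, mul_comm p n, mul_comm q m]

lemma one_lt_nat_div {T : ℕ} (hT : 0 < T) : (1 : ℝ≥0∞) < ((T + 1 : ℕ) : ℝ≥0∞) / (T : ℕ) := by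
  have h0 : (1 : ℝ≥0∞) = ((T : ℕ) : ℝ≥0∞) / ((T : ℕ) : ℝ≥0∞) :=
    (ENNReal.div_self (by exact_mod_cast hT.ne') (by simp)).symm
  rw [h0]
  exact (nat_div_lt_div hT hT).mpr (by nlinarith)

section SS
variable {A : Type*} [NonUnitalRing A] [StarRing A]

local notation "S" => starSums (Set.univ : Set A)

lemma mem_sq (c : A) : c * star c ∈ S :=
  ⟨0, fun _ => c, fun _ => trivial, by simp⟩

lemma zero_mem' : (0 : A) ∈ S := by simpa using mem_sq (0 : A)

lemma cons_mem {x : A} (c : A) (hx : x ∈ S) : c * star c + x ∈ S := by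
  obtain ⟨n, f, -, rfl⟩ := hx
  exact ⟨n + 1, Fin.cons c f, fun _ => trivial, by simp [Fin.sum_univ_succ]⟩

lemma sum_add_mem : ∀ (n : ℕ) (f : Fin (n + 1) → A) (y : A), y ∈ S →
    (∑ i, f i * star (f i)) + y ∈ S
  | 0, f, y, hy => by simpa using cons_mem (f 0) hy
  | n + 1, f, y, hy => by
      rw [Fin.sum_univ_succ, add_assoc]
      exact cons_mem (f 0) (sum_add_mem n (fun i => f i.succ) y hy)

lemma add_mem' {x y : A} (hx : x ∈ S) (hy : y ∈ S) : x + y ∈ S := by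
  obtain ⟨n, f, -, rfl⟩ := hx
  exact sum_add_mem n f y hy

lemma nsmul_mem' {x : A} (hx : x ∈ S) : ∀ k : ℕ, k • x ∈ S
  | 0 => by simpa using zero_mem' (A := A)
  | k + 1 => by rw [succ_nsmul]; exact add_mem' (nsmul_mem' hx k) hx

lemma star_eq_of_mem {x : A} (hx : x ∈ S) : star x = x := by
  obtain ⟨n, f, -, rfl⟩ := hx
  simp [star_sum, star_mul]

lemma inv_nat_exists {ε : ℝ≥0} (hε : 0 < ε) : ∃ K : ℕ, 0 < K ∧ ((K : ℕ) : ℝ≥0∞)⁻¹ < ε := by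
  obtain ⟨K, hK⟩ := ENNReal.exists_inv_nat_lt (show ((ε : ℝ≥0∞)) ≠ 0 by exact_mod_cast hε.ne')
  refine ⟨K, ?_, hK⟩
  rcases Nat.eq_zero_or_pos K with rfl | h
  · simp at hK
  · exact h

lemma ceil'_eq_zero_of (x : A)
    (H : ∀ u : A, ∀ K : ℕ, 0 < K → ∃ m n : ℕ, 0 < m ∧ 0 < n ∧ K * m ≤ n ∧
      m • (u * star u) - n • (u * x * star u) ∈ S) : ceil' x = 0 := by
  rw [ceil', ENNReal.iSup_eq_zero]
  intro u
  refine le_antisymm ?_ (zero_le)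
  refine ENNReal.le_of_forall_pos_le_add fun ε hε _ => ?_
  obtain ⟨K, hK0, hK⟩ := inv_nat_exists hε
  obtain ⟨m, n, hm, hn, hmn, hmem⟩ := H u K hK0
  refine le_trans (sInf_le ⟨m, n, hm, hn, rfl, hmem⟩) ?_
  have h1 : (m : ℝ≥0∞) / n ≤ ((1:ℕ) : ℝ≥0∞) / ((K:ℕ) : ℝ≥0∞) :=
    (nat_div_le_div hn hK0).mpr (by simpa [Nat.mul_comm] using hmn)
  simp only [Nat.cast_one, one_div] at h1
  exact h1.trans (by simpa using hK.le)

lemma ceil'_le_one_of (x : A)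
    (H : ∀ u : A, ∀ K : ℕ, 0 < K → ∃ m n : ℕ, 0 < m ∧ 0 < n ∧ m * K ≤ n * (K + 1) ∧
      m • (u * star u) - n • (u * x * star u) ∈ S) : ceil' x ≤ 1 := by
  rw [ceil', iSup_le_iff]
  intro u
  refine ENNReal.le_of_forall_pos_le_add fun ε hε _ => ?_
  obtain ⟨K, hK0, hK⟩ := inv_nat_exists hε
  obtain ⟨m, n, hm, hn, hmn, hmem⟩ := H u K hK0
  refine le_trans (sInf_le ⟨m, n, hm, hn, rfl, hmem⟩) ?_
  have h1 : (m : ℝ≥0∞) / n ≤ ((K + 1 : ℕ) : ℝ≥0∞) / ((K:ℕ) : ℝ≥0∞) :=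
    (nat_div_le_div hn hK0).mpr hmn
  refine h1.trans ?_
  have hKne : ((K:ℕ) : ℝ≥0∞) ≠ 0 := by exact_mod_cast hK0.ne'
  have h2 : ((K + 1 : ℕ) : ℝ≥0∞) / ((K:ℕ) : ℝ≥0∞) = 1 + ((K:ℕ) : ℝ≥0∞)⁻¹ := by
    push_cast
    rw [ENNReal.add_div, ENNReal.div_self hKne (by simp), one_div]
  rw [h2]
  exact add_le_add_right hK.le 1

lemma ceil'_lt_elim {x : A} {p q : ℕ} (hq : 0 < q)
    (h : ceil' x < (p : ℝ≥0∞) / q) (u : A) :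
    ∃ m n : ℕ, 0 < m ∧ 0 < n ∧ m * q < n * p ∧
      m • (u * star u) - n • (u * x * star u) ∈ S := by
  rw [ceil'] at h
  have h2 := (le_iSup _ u).trans_lt h
  obtain ⟨r, ⟨m, n, hm, hn, rfl, hmem⟩, hr⟩ := sInf_lt_iff.mp h2
  exact ⟨m, n, hm, hn, (nat_div_lt_div hn hq).mp hr, hmem⟩

lemma ceil'_zero : ceil' (0 : A) = 0 := by
  apply ceil'_eq_zero_of
  intro u K hK
  exact ⟨1, K, one_pos, hK, by omega, by simpa using mem_sq u⟩

lemma ceil'_neg_sq (s : A) : ceil' (-(s * star s)) = 0 := by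
  apply ceil'_eq_zero_of
  intro u K hK
  refine ⟨1, K, one_pos, hK, by omega, ?_⟩
  have h1 : (1:ℕ) • (u * star u) - K • (u * -(s * star s) * star u)
      = u * star u + K • ((u * s) * star (u * s)) := by
    simp [star_mul, mul_assoc, mul_neg, neg_mul, smul_neg, sub_neg_eq_add]
  rw [h1]
  exact add_mem' (mem_sq u) (nsmul_mem' (mem_sq _) K)

lemma mem_star_swap {x u : A} {m n : ℕ}
    (h : m • (u * star u) - n • (u * x * star u) ∈ S) :
    m • (u * star u) - n • (u * star x * star u) ∈ S := by
  have key : star (m • (u * star u) - n • (u * x * star u))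
      = m • (u * star u) - n • (u * star x * star u) := by
    simp [star_sub, star_nsmul, star_mul, mul_assoc]
  rw [← key, star_eq_of_mem h]
  exact h

lemma ceil'_star (x : A) : ceil' (star x) = ceil' x := by
  rw [ceil', ceil']
  apply iSup_congr
  intro u
  congr 1
  ext r
  constructor
  · rintro ⟨m, n, hm, hn, rfl, hmem⟩
    exact ⟨m, n, hm, hn, rfl, by simpa using mem_star_swap hmem⟩
  · rintro ⟨m, n, hm, hn, rfl, hmem⟩
    exact ⟨m, n, hm, hn, rfl, mem_star_swap hmem⟩

lemma ceil'_add_zero {x y : A} (hx : ceil' x = 0) (hy : ceil' y = 0) :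
    ceil' (x + y) = 0 := by
  apply ceil'_eq_zero_of
  intro u K hK
  have hx' : ceil' x < ((1:ℕ) : ℝ≥0∞) / ((2*K : ℕ) : ℝ≥0∞) := by
    rw [hx]
    exact ENNReal.div_pos (by simp) (ENNReal.natCast_ne_top _)
  have hy' : ceil' y < ((1:ℕ) : ℝ≥0∞) / ((2*K : ℕ) : ℝ≥0∞) := by
    rw [hy]
    exact ENNReal.div_pos (by simp) (ENNReal.natCast_ne_top _)
  obtain ⟨m₁, n₁, hm₁, hn₁, h₁, K₁⟩ := ceil'_lt_elim (by omega) hx' u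
  obtain ⟨m₂, n₂, hm₂, hn₂, h₂, K₂⟩ := ceil'_lt_elim (by omega) hy' u
  refine ⟨m₁ * n₂ + m₂ * n₁, n₁ * n₂, by positivity, by positivity, ?_, ?_⟩
  · nlinarith [h₁, h₂, hn₁, hn₂, hm₁, hm₂]
  · have hsplit : u * (x + y) * star u = u * x * star u + u * y * star u := by
      simp [mul_add, add_mul]
    have hid : (m₁ * n₂ + m₂ * n₁) • (u * star u) - (n₁ * n₂) • (u * (x + y) * star u)
        = n₂ • (m₁ • (u * star u) - n₁ • (u * x * star u))
          + n₁ • (m₂ • (u * star u) - n₂ • (u * y * star u)) := by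
      rw [hsplit]; module
    rw [hid]
    exact add_mem' (nsmul_mem' K₁ n₂) (nsmul_mem' K₂ n₁)

lemma ceil'_sum_zero (f : ℕ → A) :
    ∀ M : ℕ, (∀ j, j < M → ceil' (f j) = 0) → ceil' (∑ j ∈ Finset.range M, f j) = 0
  | 0, _ => by simpa using ceil'_zero (A := A)
  | M + 1, h => by
      rw [Finset.sum_range_succ]
      exact ceil'_add_zero (ceil'_sum_zero f M fun j hj => h j (by omega)) (h M (by omega))

lemma ceil'_conj_neg {x : A} (s : A) (hx : ceil' (-x) = 0) (hs : ceil' (s * star s) ≠ ⊤) :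
    ceil' (-(s * x * star s)) = 0 := by
  apply ceil'_eq_zero_of
  intro u K hK
  obtain ⟨Nz, hNz⟩ := ENNReal.exists_nat_gt hs
  have hNz' : ceil' (s * star s) < ((Nz + 1 : ℕ) : ℝ≥0∞) / ((1:ℕ) : ℝ≥0∞) := by
    rw [Nat.cast_one, div_one]
    exact hNz.trans_le (by exact_mod_cast Nat.le_succ Nz)
  obtain ⟨m₂, n₂, hm₂, hn₂, h₂, K₂⟩ := ceil'_lt_elim one_pos hNz' u
  set T := 2 * K * (Nz + 1) with hT_def
  have hT : 0 < T := by positivity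
  have hx' : ceil' (-x) < ((1:ℕ) : ℝ≥0∞) / ((T : ℕ) : ℝ≥0∞) := by
    rw [hx]
    exact ENNReal.div_pos (by simp) (ENNReal.natCast_ne_top _)
  obtain ⟨m₁, n₁, hm₁, hn₁, h₁, K₁⟩ := ceil'_lt_elim hT hx' (u * s)
  refine ⟨m₁ * m₂ + 1, n₁ * n₂, by positivity, by positivity, ?_, ?_⟩
  · -- K * (m₁ * m₂ + 1) ≤ n₁ * n₂
    have e1 : m₁ * T < n₁ := by simpa using h₁
    have e2 : m₂ < n₂ * (Nz + 1) := by simpa using h₂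
    have e3 : 2 * K * (m₁ * m₂) ≤ (m₁ * T) * n₂ := by
      calc 2 * K * (m₁ * m₂) ≤ 2 * K * (m₁ * (n₂ * (Nz + 1))) := by
            exact Nat.mul_le_mul_left _ (Nat.mul_le_mul_left _ e2.le)
        _ = (m₁ * T) * n₂ := by rw [hT_def]; ring
    have e4 : 2 * K ≤ n₁ := by
      have ha : T ≤ m₁ * T := Nat.le_mul_of_pos_left _ hm₁
      have hb : 2 * K ≤ T := by rw [hT_def]; exact Nat.le_mul_of_pos_right _ (by omega)
      exact le_trans hb (le_trans ha e1.le)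
    have : K * (m₁ * m₂ + 1) * 2 ≤ n₁ * n₂ * 2 := by
      have e5 : (m₁ * T) * n₂ ≤ n₁ * n₂ := Nat.mul_le_mul_right _ e1.le
      have e6 : n₁ ≤ n₁ * n₂ := Nat.le_mul_of_pos_right _ hn₂
      calc K * (m₁ * m₂ + 1) * 2 = 2 * K * (m₁ * m₂) + 2 * K := by ring
        _ ≤ n₁ * n₂ + n₁ := add_le_add (e3.trans e5) e4
        _ ≤ n₁ * n₂ * 2 := by nlinarith
    exact Nat.le_of_mul_le_mul_right this two_pos
  · have hv : u * (s * star s) * star u = (u * s) * star (u * s) := by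
      simp [star_mul, mul_assoc]
    have hvx : (u * s) * (-x) * star (u * s) = -(u * (s * x * star s) * star u) := by
      simp [star_mul, mul_assoc]
    rw [hv] at K₂
    rw [hvx] at K₁
    have hid : (m₁ * m₂ + 1) • (u * star u) - (n₁ * n₂) • (u * -(s * x * star s) * star u)
        = u * star u
          + n₂ • (m₁ • ((u * s) * star (u * s)) - n₁ • (-(u * (s * x * star s) * star u)))
          + m₁ • (m₂ • (u * star u) - n₂ • ((u * s) * star (u * s))) := by
      have : u * -(s * x * star s) * star u = -(u * (s * x * star s) * star u) := by
        simp [mul_assoc]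
      rw [this]; module
    rw [hid]
    exact add_mem' (add_mem' (mem_sq u) (nsmul_mem' K₁ n₂)) (nsmul_mem' K₂ m₁)

lemma ceil'_master {x y z : A} (hy : ceil' y ≤ 1) (hz : ceil' z ≠ ⊤)
    (hpt : ∀ u : A, ∃ e : A,
      u * x * star u = e * y * star e - e * star e ∧ u * z * star u = e * star e) :
    ceil' x = 0 := by
  apply ceil'_eq_zero_of
  intro u K hK
  obtain ⟨e, he1, he2⟩ := hpt u
  obtain ⟨Nz, hNz⟩ := ENNReal.exists_nat_gt hz
  have hNz' : ceil' z < ((Nz + 1 : ℕ) : ℝ≥0∞) / ((1:ℕ) : ℝ≥0∞) := by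
    rw [Nat.cast_one, div_one]
    exact hNz.trans_le (by exact_mod_cast Nat.le_succ Nz)
  obtain ⟨m₂, n₂, hm₂, hn₂, h₂, K₂⟩ := ceil'_lt_elim one_pos hNz' u
  rw [he2] at K₂
  set T := 2 * K * (Nz + 1) with hT_def
  have hT : 0 < T := by positivity
  have hy' : ceil' y < ((T + 1 : ℕ) : ℝ≥0∞) / ((T : ℕ) : ℝ≥0∞) :=
    lt_of_le_of_lt hy (one_lt_nat_div hT)
  obtain ⟨m₁', n₁', hm₁', hn₁', h₁', K₁'⟩ := ceil'_lt_elim hT hy' e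
  obtain ⟨m₁, n₁, hm₁, hn₁, h₁, hn₁2K, K₁⟩ :
      ∃ m₁ n₁ : ℕ, 0 < m₁ ∧ 0 < n₁ ∧ m₁ * T < n₁ * (T + 1) ∧ 2 * K ≤ n₁ ∧
        m₁ • (e * star e) - n₁ • (e * y * star e) ∈ S := by
    refine ⟨2 * K * m₁', 2 * K * n₁', by positivity, by positivity, ?_, ?_, ?_⟩
    · calc (2 * K * m₁') * T = (2 * K) * (m₁' * T) := by ring
        _ < (2 * K) * (n₁' * (T + 1)) := by
            exact mul_lt_mul_of_pos_left h₁' (by omega)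
        _ = (2 * K * n₁') * (T + 1) := by ring
    · exact Nat.le_mul_of_pos_right _ hn₁'
    · have hr : (2 * K * m₁') • (e * star e) - (2 * K * n₁') • (e * y * star e)
          = (2 * K) • (m₁' • (e * star e) - n₁' • (e * y * star e)) := by
        rw [smul_sub, smul_smul, smul_smul]
      rw [hr]
      exact nsmul_mem' K₁' (2 * K)
  have e2 : m₂ < n₂ * (Nz + 1) := by simpa using h₂
  rcases le_total m₁ n₁ with hcase | hcase
  · -- t = 0
    obtain ⟨s, rfl⟩ : ∃ s, n₁ = m₁ + s := ⟨n₁ - m₁, by omega⟩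
    refine ⟨1, (m₁ + s) * n₂, one_pos, by positivity, by
      calc K * 1 = K := by ring
        _ ≤ 2 * K := by omega
        _ ≤ m₁ + s := hn₁2K
        _ ≤ (m₁ + s) * n₂ := Nat.le_mul_of_pos_right _ hn₂, ?_⟩
    have hid : (1:ℕ) • (u * star u) - ((m₁ + s) * n₂) • (u * x * star u)
        = u * star u + (n₂ * s) • (e * star e)
          + n₂ • (m₁ • (e * star e) - (m₁ + s) • (e * y * star e)) := by
      rw [he1]; module
    rw [hid]
    exact add_mem' (add_mem' (mem_sq u) (nsmul_mem' (mem_sq e) (n₂ * s))) (nsmul_mem' K₁ n₂)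
  · -- deficit case : m₁ = n₁ + s
    obtain ⟨s, rfl⟩ : ∃ s, m₁ = n₁ + s := ⟨m₁ - n₁, by omega⟩
    have hsT : s * T < n₁ := by nlinarith [h₁]
    refine ⟨s * m₂ + 1, n₁ * n₂, by positivity, by positivity, ?_, ?_⟩
    · have e3 : 2 * K * (s * m₂) ≤ (s * T) * n₂ := by
        calc 2 * K * (s * m₂) ≤ 2 * K * (s * (n₂ * (Nz + 1))) :=
              Nat.mul_le_mul_left _ (Nat.mul_le_mul_left _ e2.le)
          _ = (s * T) * n₂ := by rw [hT_def]; ring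
      have e5 : (s * T) * n₂ ≤ n₁ * n₂ := Nat.mul_le_mul_right _ hsT.le
      have e6 : n₁ ≤ n₁ * n₂ := Nat.le_mul_of_pos_right _ hn₂
      have : K * (s * m₂ + 1) * 2 ≤ n₁ * n₂ * 2 := by
        calc K * (s * m₂ + 1) * 2 = 2 * K * (s * m₂) + 2 * K := by ring
          _ ≤ n₁ * n₂ + n₁ := add_le_add (e3.trans e5) hn₁2K
          _ ≤ n₁ * n₂ * 2 := by nlinarith
      exact Nat.le_of_mul_le_mul_right this two_pos
    · have hid : (s * m₂ + 1) • (u * star u) - (n₁ * n₂) • (u * x * star u)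
          = u * star u + s • (m₂ • (u * star u) - n₂ • (e * star e))
            + n₂ • ((n₁ + s) • (e * star e) - n₁ • (e * y * star e)) := by
        rw [he1]; module
      rw [hid]
      exact add_mem' (add_mem' (mem_sq u) (nsmul_mem' K₂ s)) (nsmul_mem' K₁ n₂)

lemma ceil'_mul_le_one {b : A} (h1 : ceil' (b * star b) ≤ 1) (h2 : ceil' (star b * b) ≤ 1) :
    ceil' (b * star b * (b * star b)) ≤ 1 := by
  apply ceil'_le_one_of
  intro u K hK
  have hT : 0 < 3 * K := by omega
  have one_lt := one_lt_nat_div hT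
  obtain ⟨m₂, n₂, hm₂, hn₂, h₂, K₂⟩ := ceil'_lt_elim hT (lt_of_le_of_lt h1 one_lt) u
  obtain ⟨m₁, n₁, hm₁, hn₁, h₁, K₁⟩ := ceil'_lt_elim hT (lt_of_le_of_lt h2 one_lt) (u * b)
  have hv1 : (u * b) * star (u * b) = u * (b * star b) * star u := by
    simp [star_mul, mul_assoc]
  have hv2 : (u * b) * (star b * b) * star (u * b) = u * (b * star b * (b * star b)) * star u := by
    simp [star_mul, mul_assoc]
  rw [hv1, hv2] at K₁
  refine ⟨m₁ * m₂, n₁ * n₂, by positivity, by positivity, ?_, ?_⟩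
  · have hp : (m₁ * (3 * K)) * (m₂ * (3 * K)) ≤ (n₁ * (3 * K + 1)) * (n₂ * (3 * K + 1)) :=
      Nat.mul_le_mul h₁.le h₂.le
    have hq : (3 * K + 1) * (3 * K + 1) ≤ 9 * K * (K + 1) := by nlinarith
    have : (m₁ * m₂ * K) * (9 * K) ≤ (n₁ * n₂ * (K + 1)) * (9 * K) := by
      calc (m₁ * m₂ * K) * (9 * K) = (m₁ * (3 * K)) * (m₂ * (3 * K)) := by ring
        _ ≤ (n₁ * (3 * K + 1)) * (n₂ * (3 * K + 1)) := hp
        _ = (n₁ * n₂) * ((3 * K + 1) * (3 * K + 1)) := by ring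
        _ ≤ (n₁ * n₂) * (9 * K * (K + 1)) := Nat.mul_le_mul_left _ hq
        _ = (n₁ * n₂ * (K + 1)) * (9 * K) := by ring
    exact Nat.le_of_mul_le_mul_right this (by omega)
  · have hid : (m₁ * m₂) • (u * star u)
        - (n₁ * n₂) • (u * (b * star b * (b * star b)) * star u)
        = m₁ • (m₂ • (u * star u) - n₂ • (u * (b * star b) * star u))
          + n₂ • (m₁ • (u * (b * star b) * star u)
            - n₁ • (u * (b * star b * (b * star b)) * star u)) := by
      module
    rw [hid]
    exact add_mem' (nsmul_mem' K₂ m₁) (nsmul_mem' K₁ n₂)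

end SS
def dpow' {A : Type*} [NonUnitalRing A] (d b : A) : ℕ → A
  | 0 => d
  | n + 1 => dpow' d b n * b

section Extra
variable {A : Type*} [NonUnitalRing A] [StarRing A]

local notation "S" => starSums (Set.univ : Set A)

lemma rnorm'_unpack {a : A} (h : rnorm' a ≤ 1) :
    ceil' (a * star a) ≤ 1 ∧ ceil' (star a * a) ≤ 1 := by
  rw [rnorm'] at h
  have h2 : max (ceil' (a * star a)) (ceil' (star a * a)) ≤ 1 := by
    have h3 := ENNReal.rpow_le_rpow h (by norm_num : (0:ℝ) ≤ 2)
    rwa [← ENNReal.rpow_mul, ENNReal.one_rpow, show (1/2 : ℝ) * 2 = 1 by norm_num,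
      ENNReal.rpow_one] at h3
  exact ⟨le_trans (le_max_left _ _) h2, le_trans (le_max_right _ _) h2⟩

lemma pw_add (b : A) (i : ℕ) : ∀ j : ℕ, pw b (i + j + 1) = pw b i * pw b j
  | 0 => rfl
  | j + 1 => by
      show pw b (i + j + 1) * b = pw b i * (pw b j * b)
      rw [pw_add b i j, mul_assoc]

lemma pw_comm (b : A) : ∀ j : ℕ, pw b j * b = b * pw b j
  | 0 => rfl
  | j + 1 => by
      show (pw b j * b) * b = b * (pw b j * b)
      rw [pw_comm b j, mul_assoc, pw_comm b j]

lemma dpow'_eq (d b : A) : ∀ j : ℕ, dpow' d b (j + 1) = d * pw b j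
  | 0 => rfl
  | j + 1 => by
      show dpow' d b (j + 1) * b = d * (pw b j * b)
      rw [dpow'_eq d b j, mul_assoc]

lemma dpow'_mul_star (d b : A) (hb : star b = b) (j : ℕ) :
    ∀ k : ℕ, dpow' d b j * star (dpow' d b k) = dpow' d b (j + k) * star d
  | 0 => by simp [dpow']
  | k + 1 => by
      show dpow' d b j * star (dpow' d b k * b) = dpow' d b (j + (k + 1)) * star d
      rw [star_mul, hb, ← mul_assoc]
      have h1 : dpow' d b j * b = dpow' d b (j + 1) := rfl
      rw [h1, dpow'_mul_star d b hb (j+1) k, show j + 1 + k = j + (k + 1) by omega]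

end Extra


theorem stmt13 {A : Type*} [NonUnitalRing A] [StarRing A]
    (hArch : ∀ a : A, ceil' (-a) = 0 → ceil' a ≠ ⊤)
    (hInf : ∀ a : A, ceil' a = 0 → ceil' (-a) = 0 → a = 0)
    (hProper : ∀ a : A, a * star a = 0 → a = 0) :
    (∀ a b : A, star a * a = star a * a * b → a = a * b) ∧
    (∀ a b : A, star b = b → ceil' (-b) = 0 → ∀ n : ℕ, a = a * pw b n → a = a * b) ∧
    (∀ a b : A, rnorm' a ≤ 1 → a = a * b → cle (star a * a) (star b * b)) ∧
    (∀ a b : A, rnorm' b ≤ 1 → a * b * star a = a * star a → a = a * b) ∧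
    (∀ a b : A, rnorm' b ≤ 1 → a = a * star b → a = a * b) ∧
    (∀ a b c : A, rnorm' b ≤ 1 → rnorm' c ≤ 1 → a = a * (b * c) → a = a * (b * star b)) ∧
    (∀ a b c : A, ceil' c ≤ 1 → rnorm' c ≤ 1 → a = a * b → cle b c → a = a * c) := by
  have sqfin : ∀ s : A, ceil' (s * star s) ≠ ⊤ := fun s => hArch _ (ceil'_neg_sq s)
  have masterA : ∀ a y : A, ceil' y ≤ 1 → ceil' (a * y * star a - a * star a) = 0 := by
    intro a y hy1
    refine ceil'_master hy1 (sqfin a) fun u => ⟨u * a, ?_, ?_⟩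
    · simp [star_mul, mul_assoc, mul_sub, sub_mul]
    · simp [star_mul, mul_assoc]
  have main4 : ∀ a b : A, ceil' (b * star b) ≤ 1 → a * b * star a = a * star a → a = a * b := by
    intro a b hb1 hab
    have f1 : a * (b * star a) = a * star a := by rw [← mul_assoc]; exact hab
    have f2 : a * (star b * star a) = a * star a := by
      have h2 := congrArg star hab
      simpa [star_mul, mul_assoc] using h2
    have expand : (a - a * b) * star (a - a * b)
        = a * star a - a * (star b * star a) - a * (b * star a)
          + a * (b * (star b * star a)) := by
      simp [mul_sub, sub_mul, star_sub, star_mul, mul_assoc]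
      abel
    have hdd : (a - a * b) * star (a - a * b)
        = a * (b * star b) * star a - a * star a := by
      rw [expand, f1, f2]
      simp [mul_assoc]
      abel
    have hx0 : ceil' (a * (b * star b) * star a - a * star a) = 0 := masterA a (b * star b) hb1
    have hxneg : ceil' (-(a * (b * star b) * star a - a * star a)) = 0 := by
      rw [← hdd]; exact ceil'_neg_sq (a - a * b)
    have hz := hInf _ hx0 hxneg
    have hd0 : (a - a * b) * star (a - a * b) = 0 := by rw [hdd]; exact hz
    exact sub_eq_zero.mp (hProper _ hd0)
  refine ⟨?_, ?_, ?_, ?_, ?_, ?_, ?_⟩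
  · -- part 1
    intro a b h
    have h' : star a * (a * b) = star a * a := by rw [← mul_assoc]; exact h.symm
    have expand : star (a - a * b) * (a - a * b)
        = star a * a - star a * (a * b) - star b * (star a * a)
          + star b * (star a * (a * b)) := by
      simp [mul_sub, sub_mul, star_sub, star_mul, mul_assoc]
      abel
    have key : star (a - a * b) * star (star (a - a * b)) = 0 := by
      rw [star_star, expand, h']
      abel
    have h0 := hProper _ key
    have h1 : a - a * b = 0 := by rw [← star_star (a - a * b), h0, star_zero]
    exact sub_eq_zero.mp h1
  · -- part 2
    intro a b hb hbpos n h
    set d := a - a * b with hd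
    have hstar_d : star d = star a - b * star a := by
      rw [hd, star_sub, star_mul, hb]
    have gstep : ∀ j : ℕ, dpow' d b j * star d
        = dpow' d b j * star a - dpow' d b (j + 1) * star a := by
      intro j
      rw [hstar_d, mul_sub, ← mul_assoc]
      rfl
    have h2' : pw b (2 * n + 1) = pw b n * pw b n := by
      rw [show 2 * n + 1 = n + n + 1 by omega]; exact pw_add b n n
    have h3 : a * (pw b n * pw b n) = a := by rw [← mul_assoc, ← h, ← h]
    have h5 : a * pw b (2 * n + 1) = a := by rw [h2']; exact h3
    have h4 : a * b * pw b (2 * n + 1) = a * b := by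
      rw [mul_assoc, ← pw_comm, ← mul_assoc, h5]
    have hD : dpow' d b (2 * n + 2) = d := by
      rw [show 2 * n + 2 = (2 * n + 1) + 1 by omega, dpow'_eq d b (2 * n + 1), hd,
        sub_mul, h5, h4]
    have hsum0 : ∑ j ∈ Finset.range (2 * n + 2), dpow' d b j * star d = 0 := by
      calc ∑ j ∈ Finset.range (2 * n + 2), dpow' d b j * star d
          = ∑ j ∈ Finset.range (2 * n + 2),
              (dpow' d b j * star a - dpow' d b (j + 1) * star a) :=
            Finset.sum_congr rfl fun j _ => gstep j
        _ = dpow' d b 0 * star a - dpow' d b (2 * n + 2) * star a :=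
            Finset.sum_range_sub' (fun j => dpow' d b j * star a) (2 * n + 2)
        _ = 0 := by rw [hD]; show d * star a - d * star a = 0; abel
    have hgpos : ∀ j : ℕ, ceil' (-(dpow' d b j * star d)) = 0 := by
      intro j
      rcases Nat.even_or_odd j with ⟨i, rfl⟩ | ⟨i, rfl⟩
      · rw [(dpow'_mul_star d b hb i i).symm]
        exact ceil'_neg_sq (dpow' d b i)
      · have h1 : dpow' d b (2 * i + 1) * star d = dpow' d b i * star (dpow' d b (i + 1)) := by
          rw [dpow'_mul_star d b hb i (i + 1), show i + (i + 1) = 2 * i + 1 by omega]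
        have h2 : dpow' d b i * star (dpow' d b (i + 1))
            = dpow' d b i * b * star (dpow' d b i) := by
          show dpow' d b i * star (dpow' d b i * b) = _
          rw [star_mul, hb, ← mul_assoc]
        rw [h1, h2]
        exact ceil'_conj_neg (dpow' d b i) hbpos (sqfin (dpow' d b i))
    have hg0sum : dpow' d b 0 * star d
        = -(∑ j ∈ Finset.range (2 * n + 1), dpow' d b (j + 1) * star d) := by
      have h6 := Finset.sum_range_succ' (fun j => dpow' d b j * star d) (2 * n + 1)
      have h7 := h6.symm.trans hsum0
      exact eq_neg_of_add_eq_zero_right h7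
    have hceil0 : ceil' (dpow' d b 0 * star d) = 0 := by
      rw [hg0sum, ← Finset.sum_neg_distrib]
      exact ceil'_sum_zero (fun j => -(dpow' d b (j + 1) * star d)) (2 * n + 1)
        fun j _ => hgpos (j + 1)
    have hdd0 := hInf _ hceil0 (hgpos 0)
    have hd0 : d * star d = 0 := hdd0
    have hfin : a - a * b = 0 := by rw [← hd]; exact hProper _ hd0
    exact sub_eq_zero.mp hfin

  · -- part 3
    intro a b ha h
    have ha2 := (rnorm'_unpack ha).2
    have hz3 : ceil' (star b * b) ≠ ⊤ := by simpa using sqfin (star b)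
    refine ceil'_master ha2 hz3 fun u => ⟨u * star b, ?_, ?_⟩
    · have e1 : u * (star a * a) * star u
          = (u * star b) * (star a * a) * star (u * star b) := by
        conv_lhs => rw [h]
        simp [star_mul, mul_assoc]
      have e2 : u * (star b * b) * star u = (u * star b) * star (u * star b) := by
        simp [star_mul, mul_assoc]
      rw [mul_sub, sub_mul, e1, e2]
    · simp [star_mul, mul_assoc]
  · -- part 4
    intro a b hb hab
    exact main4 a b (rnorm'_unpack hb).1 hab
  · -- part 5
    intro a b hb h
    have hstar : star a = b * star a := by
      conv_lhs => rw [h]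
      simp [star_mul]
    have hab : a * b * star a = a * star a := by
      rw [mul_assoc, ← hstar]
    exact main4 a b (rnorm'_unpack hb).1 hab
  · -- part 6
    intro a b c hbn hcn h
    obtain ⟨hb1, hb2⟩ := rnorm'_unpack hbn
    have hc1 := (rnorm'_unpack hcn).1
    have hA : ceil' (a * (b * star b) * star a - a * star a) = 0 := masterA a (b * star b) hb1
    have hz6 : ceil' (a * (b * star b) * star a) ≠ ⊤ := by
      have h6 := sqfin (a * b)
      have : (a * b) * star (a * b) = a * (b * star b) * star a := by
        simp [star_mul, mul_assoc]
      rwa [this] at h6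
    have hB : ceil' (a * star a - a * (b * star b) * star a) = 0 := by
      refine ceil'_master hc1 hz6 fun u => ⟨u * (a * b), ?_, ?_⟩
      · have e1 : u * (a * star a) * star u
            = (u * (a * b)) * (c * star c) * star (u * (a * b)) := by
          conv_lhs => rw [h]
          simp [star_mul, mul_assoc]
        have e2 : u * (a * (b * star b) * star a) * star u
            = (u * (a * b)) * star (u * (a * b)) := by
          simp [star_mul, mul_assoc]
        rw [mul_sub, sub_mul, e1, e2]
      · simp [star_mul, mul_assoc]
    have hx₁ : a * (b * star b) * star a - a * star a = 0 :=
      hInf _ hA (by rw [neg_sub]; exact hB)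
    have hab6 : a * (b * star b) * star a = a * star a := sub_eq_zero.mp hx₁
    have hw : ceil' ((b * star b) * star (b * star b)) ≤ 1 := by
      have hm := ceil'_mul_le_one hb1 hb2
      have : (b * star b) * star (b * star b) = b * star b * (b * star b) := by
        simp [star_mul, star_star]
      rwa [this]
    exact main4 a (b * star b) hw hab6
  · -- part 7
    intro a b c hc1' hcn hab hbc
    have hc1 := (rnorm'_unpack hcn).1
    have p1 : ceil' (a * (c * star c) * star a - a * star a) = 0 := masterA a _ hc1
    have haba : a * star a = a * b * star a := by
      nth_rewrite 1 [hab]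
      rfl
    have p2 : ceil' (a * star a - a * c * star a) = 0 := by
      have hneg : ceil' (-(c - b)) = 0 := by rw [neg_sub]; exact hbc
      have hpos : ceil' (-(a * (c - b) * star a)) = 0 := ceil'_conj_neg a hneg (sqfin a)
      have heq : -(a * (c - b) * star a) = a * star a - a * c * star a := by
        rw [mul_sub, sub_mul, ← haba]
        abel
      rwa [heq] at hpos
    have p3 : ceil' (a * star a - a * star c * star a) = 0 := by
      calc ceil' (a * star a - a * star c * star a)
          = ceil' (star (a * star a - a * c * star a)) := by
            congr 1
            simp [star_sub, star_mul, mul_assoc]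
        _ = ceil' (a * star a - a * c * star a) := ceil'_star _
        _ = 0 := p2
    have hdd : (a - a * c) * star (a - a * c)
        = (a * (c * star c) * star a - a * star a) + (a * star a - a * c * star a)
          + (a * star a - a * star c * star a) := by
      simp [mul_sub, sub_mul, star_sub, star_mul, mul_assoc]
      abel
    have hd0 : ceil' ((a - a * c) * star (a - a * c)) = 0 := by
      rw [hdd]; exact ceil'_add_zero (ceil'_add_zero p1 p2) p3
    have hz7 := hInf _ hd0 (ceil'_neg_sq _)
    exact sub_eq_zero.mp (hProper _ hz7)
end

section
/- Under Assumption 5, let L ⊆ A be an S-hereditary additive subgroup. Let d ∈ S, let b₁, …, b_n ∈ S with b_k ≲ d for all k ≤ n, let a₁, …, a_n ∈ S with a_k ≲ b_k for all k ≤ n, and let 1 ≤ m ≤ n. Then there exists c ∈ S such that: every f ∈ S satisfying f ≲ a_k for all k ≤ m and f ⊥ b_k for all m < k ≤ n also satisfies f ≲ c; and c ≲ b_k for all k ≤ m and c ⊥ a_k for all m < k ≤ n. -/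
open scoped Pointwise ENNReal

section MyAux
variable {A : Type*} [NonUnitalRing A] [StarRing A]

lemma mySq_mem (g : A) : g * star g ∈ starSums (Set.univ : Set A) :=
  ⟨0, fun _ => g, fun _ => trivial, by simp⟩

lemma myCons_mem {x : A} (hx : x ∈ starSums (Set.univ : Set A)) (g : A) :
    x + g * star g ∈ starSums (Set.univ : Set A) := by
  obtain ⟨n, f, -, rfl⟩ := hx
  refine ⟨n + 1, Fin.cons g f, fun _ => trivial, ?_⟩
  conv_rhs => rw [Fin.sum_univ_succ]
  simp [add_comm]

lemma myAdd_mem {x y : A} (hx : x ∈ starSums (Set.univ : Set A))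
    (hy : y ∈ starSums (Set.univ : Set A)) : x + y ∈ starSums (Set.univ : Set A) := by
  obtain ⟨n₂, f₂, -, rfl⟩ := hy
  induction n₂ with
  | zero => simpa using myCons_mem hx (f₂ 0)
  | succ k ih =>
      rw [Fin.sum_univ_castSucc, ← add_assoc]
      exact myCons_mem (ih (fun i => f₂ i.castSucc)) _

lemma myAddSmul_mem {x y : A} (hx : x ∈ starSums (Set.univ : Set A))
    (hy : y ∈ starSums (Set.univ : Set A)) (k : ℕ) :
    x + k • y ∈ starSums (Set.univ : Set A) := by
  induction k with
  | zero => simpa using hx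
  | succ k ih =>
      have h : x + (k+1) • y = (x + k • y) + y := by rw [succ_nsmul]; abel
      rw [h]; exact myAdd_mem ih hy

lemma mySmul_mem {x : A} (hx : x ∈ starSums (Set.univ : Set A)) {k : ℕ} (hk : 0 < k) :
    k • x ∈ starSums (Set.univ : Set A) := by
  obtain ⟨k, rfl⟩ := Nat.exists_eq_succ_of_ne_zero hk.ne'
  clear hk
  induction k with
  | zero => simpa using hx
  | succ k ih =>
      have h : (k+1+1) • x = (k+1) • x + x := by rw [succ_nsmul]
      rw [h]; exact myAdd_mem ih hx

/-- certificate predicate: `x ≤ 0` in the approximate sense. -/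
def myZC (x : A) : Prop := ∀ b : A, ∀ j : ℕ, 0 < j → ∃ m nn : ℕ, 0 < m ∧ 0 < nn ∧
  m * j ≤ nn ∧ m • (b * star b) - nn • (b * x * star b) ∈ starSums (Set.univ : Set A)

lemma myZC_ceil (x : A) (h : myZC x) : ceil' x = 0 := by
  rw [ceil']
  refine le_antisymm (iSup_le ?_) zero_le
  intro b
  set Sb := {q : ℝ≥0∞ | ∃ m n : ℕ, 0 < m ∧ 0 < n ∧ q = (m : ℝ≥0∞) / (n : ℝ≥0∞) ∧
    m • (b * star b) - n • (b * x * star b) ∈ starSums (Set.univ : Set A)} with hSb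
  have key : ∀ j : ℕ, 0 < j → sInf Sb ≤ ((j:ℝ≥0∞))⁻¹ := by
    intro j hj
    obtain ⟨m, nn, hm, hnn, hle, hmem⟩ := h b j hj
    refine le_trans (sInf_le ⟨m, nn, hm, hnn, rfl, hmem⟩) ?_
    rw [ENNReal.div_le_iff (by exact_mod_cast hnn.ne' : (nn:ℝ≥0∞) ≠ 0) (by simp)]
    calc (m:ℝ≥0∞) = (j:ℝ≥0∞)⁻¹ * ((j:ℝ≥0∞) * m) := by
          rw [← mul_assoc, ENNReal.inv_mul_cancel (by exact_mod_cast hj.ne') (by simp), one_mul]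
      _ ≤ (j:ℝ≥0∞)⁻¹ * (nn:ℝ≥0∞) := by
          apply mul_le_mul_right
          exact_mod_cast (by rw [mul_comm] at hle; exact hle : j * m ≤ nn)
  by_contra h0
  push_neg at h0
  obtain ⟨j, hj⟩ := ENNReal.exists_inv_nat_lt (show sInf Sb ≠ 0 by
    intro hz; rw [hz] at h0; exact absurd h0 (by simp))
  have hj0 : 0 < j := by
    rcases Nat.eq_zero_or_pos j with rfl | hpos
    · exfalso
      simp only [Nat.cast_zero, ENNReal.inv_zero] at hj
      exact not_top_lt (lt_of_lt_of_le hj (le_trans (key 1 one_pos) le_top))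
    · exact hpos
  exact absurd (lt_of_lt_of_le hj (key j hj0)) (lt_irrefl _)

lemma myZC_zero : myZC (0 : A) := by
  intro b j hj
  exact ⟨1, j, one_pos, hj, by omega, by simpa using mySq_mem b⟩

lemma myZC_neg_sq (x : A) (h : ∀ b : A, ∃ g : A, b * x * star b = g * star g) :
    myZC (-x) := by
  intro b j hj
  obtain ⟨g, hg⟩ := h b
  refine ⟨1, j, one_pos, hj, by omega, ?_⟩
  have h1 : b * (-x) * star b = -(g * star g) := by rw [mul_neg, neg_mul, hg]
  rw [h1, smul_neg, sub_neg_eq_add, one_smul]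
  exact myAddSmul_mem (mySq_mem b) (mySq_mem g) j

lemma myZC_add {x y : A} (hx : myZC x) (hy : myZC y) : myZC (x + y) := by
  intro b j hj
  obtain ⟨m₁, n₁, hm₁, hn₁, hle₁, hmem₁⟩ := hx b (2*j) (by omega)
  obtain ⟨m₂, n₂, hm₂, hn₂, hle₂, hmem₂⟩ := hy b (2*j) (by omega)
  refine ⟨n₂ * m₁ + n₁ * m₂, n₂ * n₁, by positivity, by positivity, ?_, ?_⟩
  · have h2 : (n₂ * m₁ + n₁ * m₂) * j * 2 ≤ n₂ * n₁ * 2 := by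
      calc (n₂ * m₁ + n₁ * m₂) * j * 2 = n₂ * (m₁ * (2*j)) + n₁ * (m₂ * (2*j)) := by ring
        _ ≤ n₂ * n₁ + n₁ * n₂ :=
            Nat.add_le_add (Nat.mul_le_mul_left _ hle₁) (Nat.mul_le_mul_left _ hle₂)
        _ = n₂ * n₁ * 2 := by ring
    exact Nat.le_of_mul_le_mul_right h2 (by omega)
  · have hsplit : b * (x + y) * star b = b * x * star b + b * y * star b := by
      rw [mul_add, add_mul]
    have hEq : (n₂ * m₁ + n₁ * m₂) • (b * star b) - (n₂ * n₁) • (b * (x + y) * star b)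
        = n₂ • (m₁ • (b * star b) - n₁ • (b * x * star b))
          + n₁ • (m₂ • (b * star b) - n₂ • (b * y * star b)) := by
      rw [hsplit]
      simp only [smul_sub, smul_smul, smul_add]
      rw [add_nsmul]
      abel_nf
      rw [mul_comm n₁ n₂]
    rw [hEq]
    exact myAdd_mem (mySmul_mem hmem₁ hn₂) (mySmul_mem hmem₂ hn₁)

/-- `2`-bounded certificate predicate. -/
def myHC (x : A) : Prop := ∀ cB : A, ∃ m nn : ℕ, 0 < m ∧ 0 < nn ∧ m ≤ 2 * nn ∧
  m • (cB * star cB) - nn • (cB * x * star cB) ∈ starSums (Set.univ : Set A)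

lemma myHC_of_ceil_le_one (x : A) (h : ceil' x ≤ 1) : myHC x := by
  intro cB
  have hle : sInf {q : ℝ≥0∞ | ∃ m n : ℕ, 0 < m ∧ 0 < n ∧ q = (m : ℝ≥0∞) / (n : ℝ≥0∞) ∧
      m • (cB * star cB) - n • (cB * x * star cB) ∈ starSums (Set.univ : Set A)} ≤ ceil' x := by
    rw [ceil']
    exact le_iSup (fun b : A => sInf {q : ℝ≥0∞ | ∃ m n : ℕ, 0 < m ∧ 0 < n ∧
      q = (m : ℝ≥0∞) / (n : ℝ≥0∞) ∧
      m • (b * star b) - n • (b * x * star b) ∈ starSums (Set.univ : Set A)}) cB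
  have h1 := lt_of_le_of_lt (le_trans hle h) (by norm_num : (1:ℝ≥0∞) < 2)
  obtain ⟨q, hq, hq2⟩ := sInf_lt_iff.mp h1
  obtain ⟨m, nn, hm, hnn, rfl, hmem⟩ := hq
  refine ⟨m, nn, hm, hnn, ?_, hmem⟩
  rw [ENNReal.div_lt_iff (Or.inl (by exact_mod_cast hnn.ne')) (Or.inl (by simp))] at hq2
  have hcast : (m:ℝ≥0∞) < ((2*nn : ℕ) : ℝ≥0∞) := by push_cast; exact hq2
  exact (Nat.cast_lt.mp hcast).le

lemma myCeil_le_one_of_rnorm (s : A) (h : rnorm' s ≤ 1) : ceil' (star s * s) ≤ 1 := by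
  have h2 : (max (ceil' (s * star s)) (ceil' (star s * s)) ^ (1/2 : ℝ)) ^ (2:ℝ) ≤ 1 ^ (2:ℝ) :=
    ENNReal.rpow_le_rpow h (by norm_num)
  rw [← ENNReal.rpow_mul, ENNReal.one_rpow, show (1/2:ℝ)*2 = 1 by norm_num,
    ENNReal.rpow_one] at h2
  exact le_trans (le_max_right _ _) h2

lemma myZC_key (w τ : A) (hw : myHC w) : myZC (τ * w * star τ - 2 • (τ * star τ)) := by
  intro b j hj
  obtain ⟨m₁, n₁, hm₁, hn₁, hle, hcert⟩ := hw (b * τ)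
  set cB := b * τ with hcB
  refine ⟨1, j * n₁, one_pos, by positivity, by simpa using Nat.le_mul_of_pos_right j hn₁, ?_⟩
  have hQ2 : b * (τ * w * star τ) * star b = cB * w * star cB := by
    simp only [hcB, star_mul, mul_assoc]
  have hQ1 : b * (τ * star τ) * star b = cB * star cB := by
    simp only [hcB, star_mul, mul_assoc]
  have e1 : b * (τ * w * star τ - 2 • (τ * star τ)) * star b
      = cB * w * star cB - 2 • (cB * star cB) := by
    rw [mul_sub, sub_mul, mul_smul_comm, smul_mul_assoc, hQ2, hQ1]
  have hmle : j * m₁ + j * (2 * n₁ - m₁) = j * n₁ * 2 := by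
    calc j * m₁ + j * (2 * n₁ - m₁) = j * (m₁ + (2 * n₁ - m₁)) := by ring
      _ = j * (2 * n₁) := by rw [Nat.add_sub_cancel' hle]
      _ = j * n₁ * 2 := by ring
  have hEq : (1:ℕ) • (b * star b) - (j * n₁) • (b * (τ * w * star τ - 2 • (τ * star τ)) * star b)
      = ((b * star b) + (j * (2 * n₁ - m₁)) • (cB * star cB))
        + j • (m₁ • (cB * star cB) - n₁ • (cB * w * star cB)) := by
    rw [e1, one_smul, smul_sub, smul_smul, smul_sub, smul_smul, smul_smul]
    rw [← hmle, add_nsmul]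
    abel
  rw [hEq]
  exact myAddSmul_mem (myAddSmul_mem (mySq_mem b) (mySq_mem cB) _) hcert j

end MyAux

section MyFold
variable {A : Type*} [NonUnitalRing A] {ι : Type*}

def myFW (w : ι → A) (x : A) (L : List ι) : A := L.foldl (fun y l => y - y * w l) x

@[simp] lemma myFW_nil (w : ι → A) (x : A) : myFW w x [] = x := rfl

@[simp] lemma myFW_cons (w : ι → A) (x : A) (l : ι) (L : List ι) :
    myFW w x (l :: L) = myFW w (x - x * w l) L := rfl

lemma myFW_sub (w : ι → A) (L : List ι) : ∀ x y : A,
    myFW w (x - y) L = myFW w x L - myFW w y L := by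
  induction L with
  | nil => intro x y; simp
  | cons l L ih =>
      intro x y
      rw [myFW_cons, myFW_cons, myFW_cons, ← ih]
      congr 1
      rw [sub_mul]
      abel

lemma myFW_mulw (w : ι → A) (hww : ∀ i j, w i * w j = w j * w i) (k : ι) (L : List ι) :
    ∀ x : A, myFW w (x * w k) L = myFW w x L * w k := by
  induction L with
  | nil => intro x; simp
  | cons l L ih =>
      intro x
      rw [myFW_cons, myFW_cons, ← ih]
      congr 1
      rw [sub_mul, mul_assoc, mul_assoc, hww k l]

lemma myFW_erase [DecidableEq ι] (w : ι → A) (hww : ∀ i j, w i * w j = w j * w i) (k : ι) :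
    ∀ (L : List ι), k ∈ L → ∀ x : A,
      myFW w x L = myFW w x (L.erase k) - myFW w x (L.erase k) * w k := by
  intro L
  induction L with
  | nil => intro h; exact absurd h List.not_mem_nil
  | cons l L ih =>
      intro hk x
      by_cases hlk : l = k
      · subst hlk
        rw [List.erase_cons_head, myFW_cons, myFW_sub, myFW_mulw w hww]
      · have hk' : k ∈ L := by
          rcases List.mem_cons.mp hk with h | h
          · exact absurd h.symm hlk
          · exact h
        have hne : ¬ (l == k) = true := by simpa using hlk
        rw [List.erase_cons_tail hne, myFW_cons, myFW_cons, ih hk']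

lemma myFW_pres (w : ι → A) (P : A → Prop) (hP : ∀ x l, P x → P (x - x * w l)) :
    ∀ (L : List ι) (x : A), P x → P (myFW w x L) := by
  intro L
  induction L with
  | nil => intro x hx; simpa using hx
  | cons l L ih => intro x hx; exact ih _ (hP x l hx)

lemma myFW_leftabs (w : ι → A) (g : A) :
    ∀ (L : List ι), (∀ l ∈ L, g * w l = 0) → ∀ x : A, g * x = g → g * myFW w x L = g := by
  intro L
  induction L with
  | nil => intro _ x hx; simpa using hx
  | cons l L ih =>
      intro h x hx
      rw [myFW_cons]
      refine ih (fun i hi => h i (List.mem_cons_of_mem _ hi)) _ ?_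
      rw [mul_sub, hx, ← mul_assoc, hx, h l List.mem_cons_self, sub_zero]

def myYB (X : ι → A) (x : A) (L : List ι) : A := L.foldl (fun y k => y * X k) x

@[simp] lemma myYB_nil (X : ι → A) (x : A) : myYB X x [] = x := rfl

@[simp] lemma myYB_cons (X : ι → A) (x : A) (l : ι) (L : List ι) :
    myYB X x (l :: L) = myYB X (x * X l) L := rfl

lemma myYB_pres (X : ι → A) (P : A → Prop) (hP : ∀ x l, P x → P (x * X l)) :
    ∀ (L : List ι) (x : A), P x → P (myYB X x L) := by
  intro L
  induction L with
  | nil => intro x hx; simpa using hx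
  | cons l L ih => intro x hx; exact ih _ (hP x l hx)

lemma myYB_leftinv (X : ι → A) (g : A) :
    ∀ (L : List ι), (∀ l ∈ L, g * X l = g) → ∀ x : A, g * x = g → g * myYB X x L = g := by
  intro L
  induction L with
  | nil => intro _ x hx; simpa using hx
  | cons l L ih =>
      intro h x hx
      rw [myYB_cons]
      refine ih (fun i hi => h i (List.mem_cons_of_mem _ hi)) _ ?_
      rw [← mul_assoc, hx, h l List.mem_cons_self]

lemma myYB_absorb (X : ι → A) (v : A) (hXv : ∀ l, X l * v = v * X l) (k : ι)
    (hXk : X k * v = X k) :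
    ∀ (L : List ι) (x : A), (x * v = x ∨ k ∈ L) → myYB X x L * v = myYB X x L := by
  intro L
  induction L with
  | nil =>
      intro x hx
      rcases hx with h | h
      · simpa using h
      · exact absurd h List.not_mem_nil
  | cons l L ih =>
      intro x hx
      rw [myYB_cons]
      rcases hx with h | h
      · refine ih _ (Or.inl ?_)
        rw [mul_assoc, hXv l, ← mul_assoc, h]
      · rcases List.mem_cons.mp h with h' | h'
        · subst h'
          refine ih _ (Or.inl ?_)
          rw [mul_assoc, hXk]
        · exact ih _ (Or.inr h')

end MyFold

variable {A : Type*} [NonUnitalRing A] [StarRing A]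

/-- *-domination: `a ≲ b` iff `ab* ∈ E` and `a = ab*b`. -/
def Sdom (E : Set A) (a b : A) : Prop := a * star b ∈ E ∧ a = a * star b * b

section MyAux2
variable {A' : Type*} [NonUnitalRing A'] [StarRing A']
lemma mySdom_trans {E : Set A'} (hE : ∀ x ∈ E, ∀ y ∈ E, x * y ∈ E) {x y z : A'}
    (h1 : Sdom E x y) (h2 : Sdom E y z) : Sdom E x z := by
  obtain ⟨he1, hx⟩ := h1
  obtain ⟨he2, hy⟩ := h2
  have hxz : x * star z = (x * star y) * (y * star z) := by
    conv_lhs => rw [hx]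
    rw [mul_assoc]
  constructor
  · rw [hxz]; exact hE _ he1 _ he2
  · have key : x * star z * z = x := by
      rw [hxz, mul_assoc (x * star y) (y * star z) z, ← hy, ← hx]
    exact key.symm

end MyAux2

/-- Assumption 5: `(S, E)` is a Weyl *-semigroup lying in the unit ball of an
Archimedean, infinitesimal-free, proper *-ring `A`. -/
structure Ass5 (S E : Set A) : Prop where
  mulS : ∀ a ∈ S, ∀ b ∈ S, a * b ∈ S
  starS : ∀ a ∈ S, star a ∈ S
  ES : E ⊆ S
  mulE : ∀ a ∈ E, ∀ b ∈ E, a * b ∈ E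
  starE : star '' E = E
  normal : ∀ a ∈ S, ∀ e ∈ E, star a * e * a ∈ E
  sqE : ∀ a ∈ S, star a * a ∈ E
  central : ∀ a ∈ S, ∀ e ∈ E, star a * a * e = e * (star a * a)
  ball : ∀ a ∈ S, rnorm' a ≤ 1
  arch : ∀ a : A, ceil' (-a) = 0 → ceil' a ≠ ⊤
  infFree : ∀ a : A, ceil' a = 0 → ceil' (-a) = 0 → a = 0
  proper : ∀ a : A, a * star a = 0 → a = 0

/-- Corollary 3.19: trapping between finitely many elements bounded by `d ∈ S`,
given an `S`-hereditary additive subgroup `L`. -/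
theorem stmt15 (S E L : Set A) (h5 : Ass5 S E)
    (hL0 : (0 : A) ∈ L) (hLsub : ∀ x ∈ L, ∀ y ∈ L, x - y ∈ L)
    (hLsq : ∀ s ∈ S, star s * s ∈ L)
    (hLher : ∀ p ∈ L, ceil' (-p) = 0 → (∃ s ∈ S, cle p (star s * s)) → p ∈ S)
    (n : ℕ) (d : A) (hd : d ∈ S) (b a : Fin n → A)
    (hbS : ∀ k, b k ∈ S) (haS : ∀ k, a k ∈ S)
    (hbd : ∀ k, Sdom E (b k) d) (hab : ∀ k, Sdom E (a k) (b k))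
    (m : ℕ) (hm1 : 1 ≤ m) (hmn : m ≤ n) :
    ∃ c ∈ S,
      (∀ f ∈ S, (∀ k : Fin n, (k : ℕ) < m → Sdom E f (a k)) →
        (∀ k : Fin n, m ≤ (k : ℕ) → f * star (b k) = 0) → Sdom E f c) ∧
      (∀ k : Fin n, (k : ℕ) < m → Sdom E c (b k)) ∧
      (∀ k : Fin n, m ≤ (k : ℕ) → c * star (a k) = 0) := by
  classical
  -- basic closure facts
  have hES := h5.ES
  have hmulE := h5.mulE
  have hstarE : ∀ e : A, e ∈ E → star e ∈ E := by
    intro e he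
    have h1 : star e ∈ star '' E := ⟨e, he, rfl⟩
    rwa [h5.starE] at h1
  have hn0 : 0 < n := lt_of_lt_of_le hm1 hmn
  obtain ⟨k0, hk0m⟩ : ∃ k0 : Fin n, (k0 : ℕ) < m := ⟨⟨0, hn0⟩, hm1⟩
  -- domination data
  have had : ∀ k, Sdom E (a k) d := fun k => mySdom_trans hmulE (hab k) (hbd k)
  have ha2 : ∀ k, a k * star d * d = a k := fun k => ((had k).2).symm
  have hb2 : ∀ k, b k * star d * d = b k := fun k => ((hbd k).2).symm
  have ha3 : ∀ k, a k * star (b k) * b k = a k := fun k => ((hab k).2).symm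
  have hgE : ∀ k, a k * star d ∈ E := fun k => (had k).1
  have hhE : ∀ k, b k * star d ∈ E := fun k => (hbd k).1
  -- generators
  obtain ⟨X, hX⟩ : ∃ X : Fin n → A, X = fun k => star (a k * star d) * (a k * star d) :=
    ⟨_, rfl⟩
  obtain ⟨w, hw⟩ : ∃ w : Fin n → A, w = fun k => star (b k * star d) * (b k * star d) :=
    ⟨_, rfl⟩
  have hXE : ∀ k, X k ∈ E := by
    intro k; simp only [hX]; exact hmulE _ (hstarE _ (hgE k)) _ (hgE k)
  have hwE : ∀ k, w k ∈ E := by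
    intro k; simp only [hw]; exact hmulE _ (hstarE _ (hhE k)) _ (hhE k)
  have hXcom : ∀ k, ∀ e ∈ E, X k * e = e * X k := by
    intro k e he; simp only [hX]; exact h5.central _ (hES (hgE k)) e he
  have hwcom : ∀ k, ∀ e ∈ E, w k * e = e * w k := by
    intro k e he; simp only [hw]; exact h5.central _ (hES (hhE k)) e he
  have hww : ∀ i j, w i * w j = w j * w i := fun i j => hwcom i _ (hwE j)
  have hwl : ∀ k, w k = star (b k * star d) * (b k * star d) := fun k => by rw [hw]
  have hstarg : ∀ k, star (a k * star d) = d * star (a k) := by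
    intro k; rw [star_mul, star_star]
  have hstarh : ∀ k, star (b k * star d) = d * star (b k) := by
    intro k; rw [star_mul, star_star]
  have hXsa : ∀ k, star (X k) = X k := by
    intro k; simp only [hX]; rw [star_mul, star_star]
  have hwsa : ∀ k, star (w k) = w k := by
    intro k; simp only [hw]; rw [star_mul, star_star]
  -- block identities
  have hblock1 : ∀ k, (a k * star d) * (d * star (b k)) = a k * star (b k) := by
    intro k; rw [← mul_assoc, ha2 k]
  have hblock2 : ∀ k, (a k * star (b k)) * (b k * star d) = a k * star d := by
    intro k; rw [← mul_assoc, ha3 k]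
  have hblock3 : ∀ k, (b k * star d) * (d * star (a k)) = b k * star (a k) := by
    intro k; rw [← mul_assoc, hb2 k]
  have hstar3 : ∀ k, star (b k) * (b k * star (a k)) = star (a k) := by
    intro k
    have h1 := congrArg star (ha3 k)
    rwa [star_mul, star_mul, star_star] at h1
  have hE1 : ∀ k, X k * w k = X k := by
    intro k
    simp only [hX, hw]
    rw [mul_assoc, ← mul_assoc (a k * star d), hstarh k, hblock1 k, hblock2 k]
  have hE2 : ∀ k, w k * (d * star (a k)) = d * star (a k) := by
    intro k
    simp only [hw]
    rw [mul_assoc, hblock3 k, hstarh k, mul_assoc, hstar3 k]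
  have hE3 : ∀ k, w k * d = (d * star (b k)) * b k := by
    intro k
    simp only [hw]
    rw [mul_assoc, hb2 k, hstarh k]
  -- index lists
  obtain ⟨TL, hTL⟩ : ∃ TL : List (Fin n),
      TL = (List.finRange n).filter (fun k : Fin n => decide ((k:ℕ) < m)) := ⟨_, rfl⟩
  obtain ⟨RL, hRL⟩ : ∃ RL : List (Fin n),
      RL = (List.finRange n).filter (fun k : Fin n => decide (m ≤ (k:ℕ))) := ⟨_, rfl⟩
  have hTLmem : ∀ l ∈ TL, (l:ℕ) < m := by
    intro l hl
    rw [hTL] at hl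
    simp only [List.mem_filter, List.mem_finRange, true_and, decide_eq_true_eq] at hl
    exact hl
  have hTLmem' : ∀ l : Fin n, (l:ℕ) < m → l ∈ TL := by
    intro l hlm
    rw [hTL]
    simp only [List.mem_filter, List.mem_finRange, true_and, decide_eq_true_eq]
    exact hlm
  have hRLmem : ∀ l ∈ RL, m ≤ (l:ℕ) := by
    intro l hl
    rw [hRL] at hl
    simp only [List.mem_filter, List.mem_finRange, true_and, decide_eq_true_eq] at hl
    exact hl
  have hRLmem' : ∀ l : Fin n, m ≤ (l:ℕ) → l ∈ RL := by
    intro l hlm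
    rw [hRL]
    simp only [List.mem_filter, List.mem_finRange, true_and, decide_eq_true_eq]
    exact hlm
  -- the fundamental elements
  obtain ⟨Y, hY⟩ : ∃ Y : A, Y = myYB X (X k0) TL := ⟨_, rfl⟩
  obtain ⟨rh, hrh⟩ : ∃ rh : A, rh = myFW w Y RL := ⟨_, rfl⟩
  obtain ⟨p, hp⟩ : ∃ p : A, p = rh * rh := ⟨_, rfl⟩
  -- the word-square set and its additive closure
  obtain ⟨W, hWdef⟩ : ∃ W : Set A, W = {x : A | ∃ t, t ∈ E ∧ x = star t * t} := ⟨_, rfl⟩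
  have hWmem : ∀ t, t ∈ E → star t * t ∈ W := by
    intro t ht; rw [hWdef]; exact ⟨t, ht, rfl⟩
  have hWmul : ∀ x ∈ W, ∀ y ∈ W, x * y ∈ W := by
    rw [hWdef]
    rintro x ⟨t, ht, rfl⟩ y ⟨u, hu, rfl⟩
    refine ⟨u * t, hmulE _ hu _ ht, ?_⟩
    rw [star_mul, mul_assoc (star t) (star u) (u * t), ← mul_assoc (star u) u t,
      h5.central u (hES hu) t ht, ← mul_assoc (star t) t (star u * u)]
  have hXW : ∀ k, X k ∈ W := by
    intro k; simp only [hX]; exact hWmem _ (hgE k)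
  have hwW : ∀ k, w k ∈ W := by
    intro k; simp only [hw]; exact hWmem _ (hhE k)
  have hYW : Y ∈ W := by
    rw [hY]
    exact myYB_pres X (· ∈ W) (fun x l hx => hWmul x hx _ (hXW l)) TL _ (hXW k0)
  have hmulWG : ∀ x ∈ W, ∀ y ∈ AddSubgroup.closure W, x * y ∈ AddSubgroup.closure W := by
    intro x hxW y hy
    refine AddSubgroup.closure_induction
      (fun z hz => AddSubgroup.subset_closure (hWmul x hxW z hz))
      (by rw [mul_zero]; exact zero_mem _)
      (fun u v _ _ hu hv => by rw [mul_add]; exact add_mem hu hv)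
      (fun u _ hu => by rw [mul_neg]; exact neg_mem hu) hy
  have hGmul : ∀ x ∈ AddSubgroup.closure W, ∀ y ∈ AddSubgroup.closure W,
      x * y ∈ AddSubgroup.closure W := by
    intro x hx y hy
    refine AddSubgroup.closure_induction
      (fun z hz => hmulWG z hz y hy)
      (by rw [zero_mul]; exact zero_mem _)
      (fun u v _ _ hu hv => by rw [add_mul]; exact add_mem hu hv)
      (fun u _ hu => by rw [neg_mul]; exact neg_mem hu) hx
  have hGL : ∀ x ∈ AddSubgroup.closure W, x ∈ L := by
    intro x hx
    refine AddSubgroup.closure_induction (fun z hz => ?_) hL0 (fun u v _ _ hu hv => ?_)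
      (fun u _ hu => ?_) hx
    · rw [hWdef] at hz
      obtain ⟨t, ht, rfl⟩ := hz
      exact hLsq _ (hES ht)
    · have h0v : (0:A) - v ∈ L := hLsub 0 hL0 v hv
      have huv := hLsub u hu _ h0v
      have hrw : u - (0 - v) = u + v := by abel
      rwa [hrw] at huv
    · have h0u := hLsub 0 hL0 u hu
      rwa [zero_sub] at h0u
  -- self-adjointness and commutation with E
  have hQY : star Y = Y ∧ ∀ e ∈ E, Y * e = e * Y := by
    rw [hY]
    refine myYB_pres X (fun x => star x = x ∧ ∀ e ∈ E, x * e = e * x) ?_ TL _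
      ⟨hXsa k0, hXcom k0⟩
    rintro x l ⟨hsa, hcom⟩
    constructor
    · rw [star_mul, hXsa l, hsa]
      exact (hcom _ (hXE l)).symm
    · intro e he
      rw [mul_assoc, hXcom l e he, ← mul_assoc, hcom e he, mul_assoc]
  have hQrh : star rh = rh ∧ ∀ e ∈ E, rh * e = e * rh := by
    rw [hrh]
    refine myFW_pres w (fun x => star x = x ∧ ∀ e ∈ E, x * e = e * x) ?_ RL Y hQY
    rintro x l ⟨hsa, hcom⟩
    have hxw : x * w l = w l * x := hcom _ (hwE l)
    constructor
    · rw [star_sub, star_mul, hwsa l, hsa, ← hxw]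
    · intro e he
      rw [sub_mul, hcom e he, mul_assoc, hwcom l e he, ← mul_assoc, hcom e he, mul_assoc,
        ← mul_sub]
  -- absorption
  have hYabs : ∀ k : Fin n, (k:ℕ) < m → Y * w k = Y := by
    intro k hk
    rw [hY]
    exact myYB_absorb X (w k) (fun l => hXcom l _ (hwE k)) k (hE1 k) TL _
      (Or.inr (hTLmem' k hk))
  have hrhabs : ∀ k : Fin n, (k:ℕ) < m → rh * w k = rh := by
    intro k hk
    rw [hrh, ← myFW_mulw w hww k RL Y, hYabs k hk]
  -- orthogonality for k ≥ m
  have hrhda : ∀ k : Fin n, m ≤ (k:ℕ) → rh * (d * star (a k)) = 0 := by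
    intro k hk
    have herase := myFW_erase w hww k RL (hRLmem' k hk) Y
    rw [hrh, herase, sub_mul, mul_assoc, hE2 k, sub_self]
  -- p belongs to L
  have hrhG : rh ∈ AddSubgroup.closure W := by
    rw [hrh]
    refine myFW_pres w (· ∈ AddSubgroup.closure W) ?_ RL Y (AddSubgroup.subset_closure hYW)
    intro x l hx
    exact sub_mem hx (hGmul x hx _ (AddSubgroup.subset_closure (hwW l)))
  have hpL : p ∈ L := by
    rw [hp]; exact hGL _ (hGmul _ hrhG _ hrhG)
  -- positivity of p
  have hpneg : ceil' (-p) = 0 := by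
    rw [hp]
    apply myZC_ceil
    apply myZC_neg_sq
    intro bb
    refine ⟨bb * rh, ?_⟩
    simp only [star_mul, hQrh.1, mul_assoc]
  -- half-certificates for the w k
  have hHCw : ∀ l : Fin n, myHC (w l) := by
    intro l
    have h1 : ceil' (star (b l * star d) * (b l * star d)) ≤ 1 :=
      myCeil_le_one_of_rnorm _ (h5.ball _ (hES (hhE l)))
    have h2 : myHC (star (b l * star d) * (b l * star d)) := myHC_of_ceil_le_one _ h1
    simpa only [hw] using h2
  -- the fold–square comparison
  have hFS : ∀ (Lst : List (Fin n)) (x : A), star x = x → (∀ e ∈ E, x * e = e * x) →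
      myZC (myFW w x Lst * myFW w x Lst - x * x) := by
    intro Lst
    induction Lst with
    | nil => intro x _ _; rw [myFW_nil, sub_self]; exact myZC_zero
    | cons l Lst ih =>
        intro x hsa hcom
        have hxw : x * w l = w l * x := hcom _ (hwE l)
        have hsa' : star (x - x * w l) = x - x * w l := by
          rw [star_sub, star_mul, hwsa l, hsa, ← hxw]
        have hcom' : ∀ e ∈ E, (x - x * w l) * e = e * (x - x * w l) := by
          intro e he
          rw [sub_mul, hcom e he, mul_assoc, hwcom l e he, ← mul_assoc, hcom e he, mul_assoc,
            ← mul_sub]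
        have h1 : (x * w l) * x = (x * x) * w l := by
          rw [mul_assoc, ← hxw, ← mul_assoc]
        have h2 : x * (x * w l) = (x * x) * w l := (mul_assoc x x (w l)).symm
        have h3 : (x * w l) * (x * w l) = ((x * x) * w l) * w l := by
          rw [mul_assoc x (w l), ← mul_assoc (w l) x (w l), ← hxw, ← mul_assoc, ← mul_assoc]
        have hexp : (x - x * w l) * (x - x * w l) - x * x
            = ((x * x) * w l) * w l - 2 • ((x * x) * w l) := by
          rw [sub_mul, mul_sub, mul_sub, h1, h2, h3, two_smul]
          abel
        have hcw2 : (d * star (b l)) * w l = w l * (d * star (b l)) := by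
          rw [← hstarh l]
          exact (hwcom l _ (hstarE _ (hhE l))).symm
        have hstt : star (x * (d * star (b l))) = (b l * star d) * x := by
          rw [star_mul, star_mul, star_star, hsa]
        have hts : (x * (d * star (b l))) * star (x * (d * star (b l))) = (x * x) * w l := by
          rw [hstt, mul_assoc x (d * star (b l)) ((b l * star d) * x),
            ← mul_assoc (d * star (b l)) (b l * star d) x, ← hstarh l, ← hwl l, ← hxw,
            ← mul_assoc x x (w l)]
        have htws : (x * (d * star (b l))) * w l * star (x * (d * star (b l)))
            = ((x * x) * w l) * w l := by
          rw [hstt, mul_assoc x (d * star (b l)) (w l), hcw2,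
            ← mul_assoc x (w l) (d * star (b l)),
            mul_assoc (x * w l) (d * star (b l)) ((b l * star d) * x),
            ← mul_assoc (d * star (b l)) (b l * star d) x, ← hstarh l, ← hwl l, ← hxw]
          exact h3
        have hkey : myZC ((x - x * w l) * (x - x * w l) - x * x) := by
          rw [hexp, ← htws, ← hts]
          exact myZC_key (w l) (x * (d * star (b l))) (hHCw l)
        have hsum := myZC_add (ih _ hsa' hcom') hkey
        rw [sub_add_sub_cancel] at hsum
        rw [myFW_cons]
        exact hsum
  -- p ∈ S via heredity
  obtain ⟨rY, hrYE, hYeq⟩ : ∃ t, t ∈ E ∧ Y = star t * t := by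
    rw [hWdef] at hYW; exact hYW
  have hs2 : star (rY * rY) * (rY * rY) = Y * Y := by
    rw [star_mul, mul_assoc, ← mul_assoc (star rY) rY rY, h5.central rY (hES hrYE) rY hrYE,
      ← mul_assoc (star rY) rY (star rY * rY), ← hYeq]
  have hpS : p ∈ S := by
    refine hLher p hpL hpneg ⟨rY * rY, hES (hmulE _ hrYE _ hrYE), ?_⟩
    show ceil' (p - star (rY * rY) * (rY * rY)) = 0
    rw [hs2, hp, hrh]
    exact myZC_ceil _ (hFS RL Y hQY.1 hQY.2)
  -- assemble c
  have hpsa : star p = p := by rw [hp, star_mul, hQrh.1]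
  have hppE : p * p ∈ E := by
    have h1 := h5.sqE p hpS
    rwa [hpsa] at h1
  have hppS : p * p ∈ S := h5.mulS p hpS p hpS
  have hcS : p * p * d ∈ S := h5.mulS _ hppS d hd
  have hpabs : ∀ k : Fin n, (k:ℕ) < m → p * w k = p := by
    intro k hk
    rw [hp, mul_assoc, hrhabs k hk]
  have hdbE : ∀ k, d * star (b k) ∈ E := by
    intro k
    rw [← hstarh k]
    exact hstarE _ (hhE k)
  refine ⟨p * p * d, hcS, ?_, ?_, ?_⟩
  · -- universality
    intro f hfS hfa hfb
    have hfd : Sdom E f d := mySdom_trans hmulE (hfa k0 hk0m) (had k0)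
    have hfd2 : f * star d * d = f := hfd.2.symm
    have hfdE : f * star d ∈ E := hfd.1
    have hfa2 : ∀ k : Fin n, (k:ℕ) < m → f * star (a k) * a k = f :=
      fun k hk => ((hfa k hk).2).symm
    have hfdX : ∀ k : Fin n, (k:ℕ) < m → (f * star d) * X k = f * star d := by
      intro k hk
      simp only [hX]
      rw [hstarg k, ← mul_assoc (f * star d) (d * star (a k)) (a k * star d),
        ← mul_assoc (f * star d) d (star (a k)), hfd2,
        ← mul_assoc (f * star (a k)) (a k) (star d), hfa2 k hk]
    have hfdw : ∀ k : Fin n, m ≤ (k:ℕ) → (f * star d) * w k = 0 := by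
      intro k hk
      simp only [hw]
      rw [hstarh k, ← mul_assoc (f * star d) (d * star (b k)) (b k * star d),
        ← mul_assoc (f * star d) d (star (b k)), hfd2, hfb k hk, zero_mul]
    have hfdY : (f * star d) * Y = f * star d := by
      rw [hY]
      exact myYB_leftinv X (f * star d) TL (fun l hl => hfdX l (hTLmem l hl)) _
        (hfdX k0 hk0m)
    have hfdrh : (f * star d) * rh = f * star d := by
      rw [hrh]
      exact myFW_leftabs w (f * star d) RL (fun l hl => hfdw l (hRLmem l hl)) Y hfdY
    have hfdp : (f * star d) * p = f * star d := by
      rw [hp, ← mul_assoc, hfdrh, hfdrh]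
    have hfdpp : (f * star d) * (p * p) = f * star d := by
      rw [← mul_assoc, hfdp, hfdp]
    have hstarc : star (p * p * d) = star d * (p * p) := by
      rw [star_mul, star_mul, hpsa]
    constructor
    · rw [hstarc, ← mul_assoc]
      exact hmulE _ hfdE _ hppE
    · symm
      calc f * star (p * p * d) * (p * p * d)
          = ((f * star d) * (p * p)) * ((p * p) * d) := by
            rw [hstarc, ← mul_assoc f (star d) (p * p)]
        _ = (f * star d) * ((p * p) * d) := by rw [hfdpp]
        _ = ((f * star d) * (p * p)) * d := by rw [← mul_assoc (f * star d) (p * p) d]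
        _ = (f * star d) * d := by rw [hfdpp]
        _ = f := hfd2
  · -- c ≲ b k for k < m
    intro k hk
    constructor
    · rw [mul_assoc]
      exact hmulE _ hppE _ (hdbE k)
    · symm
      calc p * p * d * star (b k) * b k
          = (p * p) * ((d * star (b k)) * b k) := by
            rw [mul_assoc (p * p) d (star (b k)), mul_assoc (p * p) (d * star (b k)) (b k)]
        _ = (p * p) * (w k * d) := by rw [← hE3 k]
        _ = ((p * p) * w k) * d := by rw [← mul_assoc (p * p) (w k) d]
        _ = (p * p) * d := by rw [mul_assoc p p (w k), hpabs k hk]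
  · -- c ⊥ a k for k ≥ m
    intro k hk
    calc p * p * d * star (a k)
        = p * (p * (d * star (a k))) := by
          rw [mul_assoc (p * p) d (star (a k)), mul_assoc p p (d * star (a k))]
      _ = p * (rh * (rh * (d * star (a k)))) := by rw [hp, mul_assoc rh rh (d * star (a k))]
      _ = 0 := by rw [hrhda k hk, mul_zero, mul_zero]
end
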